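/- For every c > 0 there exists a constant K > 0, depending only on c and the dimension d ≥ 2, with the following property: for all p, q ∈ ℝ^d and r > 0 with |p − q|/r ≤ c, and for all isometric rigid solid cylinders C_p ⊂ B(p,r) and C_q ⊂ B(q,r), there exists a C¹ diffeomorphism φ of ℝ^d whose support is contained in the elongated neighbourhood E(p,q;10r), which maps C_p isometrically onto C_q, and which satisfies [φ]_{Lip} ≤ K. -/

import Mathlib

set_option maxHeartbeats 1600000

open Real Function
open scoped RealInnerProductSpace NNReal

noncomputable section

/-- The rigid solid cylinder `C(a,b;ρ)` in `ℝ^d`: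
`{(a+b)/2 + (s/2)•(b-a) + v : s ∈ (-1,1), v ⊥ (b-a), ‖v‖ < ρ}`. -/
def rigidCyl {d : ℕ} (a b : EuclideanSpace ℝ (Fin d)) (ρ : ℝ) :
    Set (EuclideanSpace ℝ (Fin d)) :=
  {x | ∃ (s : ℝ) (v : EuclideanSpace ℝ (Fin d)), |s| < 1 ∧ (inner ℝ v (b - a) : ℝ) = 0 ∧
    ‖v‖ < ρ ∧ x = midpoint ℝ a b + (s / 2) • (b - a) + v}

/-- The elongated neighbourhood `E(p,q;r)`: points at distance less than `r` from the
segment `[p,q]`. -/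
def elongNbhd {d : ℕ} (p q : EuclideanSpace ℝ (Fin d)) (r : ℝ) :
    Set (EuclideanSpace ℝ (Fin d)) :=
  {x | ∃ t ∈ Set.Icc (0 : ℝ) 1, dist x (t • p + (1 - t) • q) < r}



namespace CylAux

section Transition

/-- `Real.smoothTransition` is Lipschitz for some constant. -/
lemma exists_lip_smoothTransition :
    ∃ L : ℝ, 0 ≤ L ∧ ∀ s t : ℝ,
      |Real.smoothTransition s - Real.smoothTransition t| ≤ L * |s - t| := by
  have hdiff : Differentiable ℝ Real.smoothTransition :=
    (Real.smoothTransition.contDiff (n := 1)).differentiable one_ne_zero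
  have hcont : Continuous (fun t => ‖deriv Real.smoothTransition t‖) :=
    ((Real.smoothTransition.contDiff (n := 1)).continuous_deriv le_rfl).norm
  obtain ⟨x₀, -, hx₀⟩ := (isCompact_Icc (a := (0:ℝ)) (b := 1)).exists_isMaxOn
    (Set.nonempty_Icc.2 zero_le_one) hcont.continuousOn
  set L : ℝ := ‖deriv Real.smoothTransition x₀‖ with hL
  have hL0 : 0 ≤ L := norm_nonneg _
  have hbound : ∀ t : ℝ, ‖deriv Real.smoothTransition t‖ ≤ L := by
    intro t
    rcases le_or_gt t 0 with ht | ht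
    · rcases eq_or_lt_of_le ht with rfl | ht'
      · exact hx₀ ⟨le_rfl, zero_le_one⟩
      · have : deriv Real.smoothTransition t = 0 := by
          have hev : Real.smoothTransition =ᶠ[nhds t] (fun _ => (0:ℝ)) := by
            filter_upwards [Iio_mem_nhds ht'] with y hy
            exact Real.smoothTransition.zero_of_nonpos (le_of_lt hy)
          rw [hev.deriv_eq]; simp
        simp [this, hL0]
    rcases le_or_gt t 1 with ht1 | ht1
    · exact hx₀ ⟨ht.le, ht1⟩
    · have : deriv Real.smoothTransition t = 0 := by
        have hev : Real.smoothTransition =ᶠ[nhds t] (fun _ => (1:ℝ)) := by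
          filter_upwards [Ioi_mem_nhds ht1] with y hy
          exact Real.smoothTransition.one_of_one_le (le_of_lt hy)
        rw [hev.deriv_eq]; simp
      simp [this, hL0]
  refine ⟨L, hL0, fun s t => ?_⟩
  have := lipschitzWith_of_nnnorm_deriv_le (C := Real.toNNReal L) hdiff (fun x => ?_)
  · have h2 := this.dist_le_mul s t
    simpa [Real.dist_eq, Real.coe_toNNReal _ hL0] using h2
  · rw [← NNReal.coe_le_coe]
    simpa [Real.coe_toNNReal _ hL0] using hbound x


end Transition

section Iter

variable {α : Type*}

def compIter (φ : ℕ → α → α) : ℕ → α → α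
  | 0 => id
  | n+1 => φ n ∘ compIter φ n

def compIterInv (ψ : ℕ → α → α) : ℕ → α → α
  | 0 => id
  | n+1 => compIterInv ψ n ∘ ψ n

lemma compIter_leftInverse {φ ψ : ℕ → α → α} (h : ∀ k, LeftInverse (ψ k) (φ k)) (n : ℕ) :
    LeftInverse (compIterInv ψ n) (compIter φ n) := by
  induction n with
  | zero => intro x; rfl
  | succ n ih =>
    intro x
    simp only [compIter, compIterInv, comp_apply]
    rw [h n (compIter φ n x), ih x]

lemma compIter_rightInverse {φ ψ : ℕ → α → α} (h : ∀ k, RightInverse (ψ k) (φ k)) (n : ℕ) :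
    RightInverse (compIterInv ψ n) (compIter φ n) := by
  induction n with
  | zero => intro x; rfl
  | succ n ih =>
    intro x
    simp only [compIter, compIterInv, comp_apply]
    rw [ih (ψ n x), h n x]

lemma compIter_contDiff {E : Type*} [NormedAddCommGroup E] [NormedSpace ℝ E]
    {φ : ℕ → E → E} (h : ∀ k, ContDiff ℝ 1 (φ k)) (n : ℕ) :
    ContDiff ℝ 1 (compIter φ n) := by
  induction n with
  | zero => exact contDiff_id
  | succ n ih => exact (h n).comp ih

lemma compIterInv_contDiff {E : Type*} [NormedAddCommGroup E] [NormedSpace ℝ E]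
    {ψ : ℕ → E → E} (h : ∀ k, ContDiff ℝ 1 (ψ k)) (n : ℕ) :
    ContDiff ℝ 1 (compIterInv ψ n) := by
  induction n with
  | zero => exact contDiff_id
  | succ n ih => exact ih.comp (h n)

lemma compIter_lip {E : Type*} [MetricSpace E] {φ : ℕ → E → E}
    (h : ∀ k, ∀ x y, dist (φ k x) (φ k y) ≤ (3/2) * dist x y) (n : ℕ) :
    ∀ x y, dist (compIter φ n x) (compIter φ n y) ≤ (3/2)^n * dist x y := by
  induction n with
  | zero => intro x y; simp [compIter]
  | succ n ih =>
    intro x y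
    calc dist (compIter φ (n+1) x) (compIter φ (n+1) y)
        ≤ (3/2) * dist (compIter φ n x) (compIter φ n y) := h n _ _
      _ ≤ (3/2) * ((3/2)^n * dist x y) := by
          have := ih x y; nlinarith [dist_nonneg (x := compIter φ n x) (y := compIter φ n y)]
      _ = (3/2)^(n+1) * dist x y := by ring

lemma compIter_fix {φ : ℕ → α → α} {x : α} {n : ℕ}
    (h : ∀ k, k < n → φ k x = x) : compIter φ n x = x := by
  induction n with
  | zero => rfl
  | succ n ih =>
    have hx : compIter φ n x = x := ih (fun k hk => h k (hk.trans (Nat.lt_succ_self n)))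
    simp only [compIter, comp_apply, hx]
    exact h n (Nat.lt_succ_self n)

lemma compIter_track {φ g : ℕ → α → α} {x : α} (h0 : g 0 x = x)
    (hstep : ∀ k, φ k (g k x) = g (k+1) x) (n : ℕ) :
    compIter φ n x = g n x := by
  induction n with
  | zero => exact h0.symm
  | succ n ih => simp only [compIter, comp_apply, ih]; exact hstep n


end Iter

section Inverse

variable {E : Type*} [NormedAddCommGroup E] [NormedSpace ℝ E] [CompleteSpace E]

/-- A global `C¹` inverse for a map of the form `id + F` where `F` is a `1/2`-contraction. -/
lemma exists_inverse {F : E → E} (hF : ContDiff ℝ 1 F)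
    (hlip : ∀ x y, dist (F x) (F y) ≤ (1/2) * dist x y) :
    ∃ ψ : E → E, ContDiff ℝ 1 ψ ∧
      Function.LeftInverse ψ (fun x => x + F x) ∧
      Function.RightInverse ψ (fun x => x + F x) := by
  set φ : E → E := fun x => x + F x with hφdef
  have hφc : ContDiff ℝ 1 φ := contDiff_id.add hF
  -- injectivity
  have hinj : Function.Injective φ := by
    intro x y hxy
    by_contra hne
    have hd : 0 < dist x y := dist_pos.2 hne
    have h1 : dist x y ≤ dist (φ x) (φ y) + dist (F x) (F y) := by
      rw [dist_eq_norm, dist_eq_norm, dist_eq_norm]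
      have hxy : x - y = (φ x - φ y) - (F x - F y) := by simp [hφdef]; abel
      rw [hxy]
      exact norm_sub_le _ _
    have h2 := hlip x y
    rw [hxy] at h1
    simp only [dist_self, zero_add] at h1
    linarith
  -- surjectivity
  have hsurj : Function.Surjective φ := by
    intro y
    have : Nonempty E := ⟨0⟩
    set g : E → E := fun x => y - F x with hg
    have hglip : LipschitzWith (1/2 : ℝ≥0) g := by
      apply LipschitzWith.of_dist_le_mul
      intro a b
      have : dist (g a) (g b) = dist (F a) (F b) := dist_sub_left y (F a) (F b)
      rw [this]
      simpa using hlip a b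
    have hcontr : ContractingWith (1/2 : ℝ≥0) g := ⟨by exact_mod_cast (by norm_num : (1:ℝ)/2 < 1), hglip⟩
    obtain x₀ := hcontr.fixedPoint g
    have hx₀ : g (hcontr.fixedPoint g) = hcontr.fixedPoint g := hcontr.fixedPoint_isFixedPt
    refine ⟨hcontr.fixedPoint g, ?_⟩
    have := hx₀
    simp only [hg] at this
    simp only [hφdef]
    rw [show hcontr.fixedPoint g + F (hcontr.fixedPoint g)
        = y - F (hcontr.fixedPoint g) + F (hcontr.fixedPoint g) by rw [this]]
    abel
  set ψ : E → E := Function.invFun φ with hψdef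
  have hleft : Function.LeftInverse ψ φ := Function.leftInverse_invFun hinj
  have hright : Function.RightInverse ψ φ := Function.rightInverse_invFun hsurj
  refine ⟨ψ, ?_, hleft, hright⟩
  -- C¹ of the inverse
  rw [contDiff_iff_contDiffAt]
  intro y₀
  set x₀ : E := ψ y₀ with hx₀def
  have hφx₀ : φ x₀ = y₀ := hright y₀
  set A : E →L[ℝ] E := fderiv ℝ F x₀ with hA
  have hFd : HasFDerivAt F A x₀ := (hF.differentiable one_ne_zero x₀).hasFDerivAt
  have hAle : ‖A‖ ≤ 1/2 := by
    apply hFd.le_of_lip' (by norm_num)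
    filter_upwards with x
    have := hlip x x₀
    rwa [dist_eq_norm, dist_eq_norm] at this
  have hAlt : ‖-A‖ < 1 := by rw [norm_neg]; linarith
  set uA : (E →L[ℝ] E)ˣ := Units.oneSub (-A) hAlt with huA
  set e : E ≃L[ℝ] E := ContinuousLinearEquiv.ofUnit uA with he
  have hecoe : (e : E →L[ℝ] E) = ContinuousLinearMap.id ℝ E + A := by
    have : (e : E →L[ℝ] E) = (uA : E →L[ℝ] E) := rfl
    rw [this, huA, Units.val_oneSub, sub_neg_eq_add]
    rfl
  have hφd : HasFDerivAt φ (e : E →L[ℝ] E) x₀ := by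
    rw [hecoe]
    exact (hasFDerivAt_id x₀).add hFd
  have hφca : ContDiffAt ℝ 1 φ x₀ := hφc.contDiffAt
  have hstrict : HasStrictFDerivAt φ (e : E →L[ℝ] E) x₀ :=
    hφca.hasStrictFDerivAt' hφd one_ne_zero
  have hli : ContDiffAt ℝ 1 (hφca.localInverse hφd one_ne_zero) (φ x₀) :=
    hφca.to_localInverse hφd one_ne_zero
  have hev : ∀ᶠ y in nhds (φ x₀), φ (hφca.localInverse hφd one_ne_zero y) = y := by
    have := hstrict.eventually_right_inverse
    exact this
  have heq : ψ =ᶠ[nhds (φ x₀)] hφca.localInverse hφd one_ne_zero := by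
    filter_upwards [hev] with y hy
    have : φ (ψ y) = y := hright y
    exact hinj (this.trans hy.symm)
  rw [← hφx₀]
  exact hli.congr_of_eventuallyEq heq


end Inverse

section Rot

variable {E : Type*} [NormedAddCommGroup E] [InnerProductSpace ℝ E]

/-- Rotation by angle `a` in the plane spanned by the orthonormal pair `u, e`. -/
def rot (u e : E) (a : ℝ) (x : E) : E :=
  x + (Real.cos a - 1) • (⟪u, x⟫ • u + ⟪e, x⟫ • e)
    + Real.sin a • (⟪u, x⟫ • e - ⟪e, x⟫ • u)

variable {u e : E}

lemma rot_zero (x : E) : rot u e 0 x = x := by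
  simp [rot]

lemma rot_add (a : ℝ) (x y : E) : rot u e a (x + y) = rot u e a x + rot u e a y := by
  simp only [rot, inner_add_right]
  module

lemma rot_smul (a t : ℝ) (x : E) : rot u e a (t • x) = t • rot u e a x := by
  simp only [rot, real_inner_smul_right]
  module

lemma rot_sub (a : ℝ) (x y : E) : rot u e a (x - y) = rot u e a x - rot u e a y := by
  simp only [rot, inner_sub_right]
  module

section ortho
variable (hu : ‖u‖ = 1) (he : ‖e‖ = 1) (hue : ⟪u, e⟫ = 0)
include hu he hue

private lemma huu' : ⟪u, u⟫ = 1 := by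
  rw [real_inner_self_eq_norm_sq, hu]; norm_num

private lemma hee' : ⟪e, e⟫ = 1 := by
  rw [real_inner_self_eq_norm_sq, he]; norm_num

private lemma heu' : ⟪e, u⟫ = 0 := by rw [real_inner_comm]; exact hue

lemma inner_u_rot (a : ℝ) (x : E) :
    ⟪u, rot u e a x⟫ = Real.cos a * ⟪u, x⟫ - Real.sin a * ⟪e, x⟫ := by
  simp only [rot, inner_add_right, inner_sub_right, real_inner_smul_right,
    huu' hu he hue, hee' hu he hue, heu' hu he hue, hue]
  ring

lemma inner_e_rot (a : ℝ) (x : E) :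
    ⟪e, rot u e a x⟫ = Real.sin a * ⟪u, x⟫ + Real.cos a * ⟪e, x⟫ := by
  simp only [rot, inner_add_right, inner_sub_right, real_inner_smul_right,
    huu' hu he hue, hee' hu he hue, heu' hu he hue, hue]
  ring

lemma rot_rot (a b : ℝ) (x : E) :
    rot u e a (rot u e b x) = rot u e (a + b) x := by
  have h1 := inner_u_rot hu he hue b x
  have h2 := inner_e_rot hu he hue b x
  conv_lhs => rw [rot, h1, h2]
  conv_lhs => rw [rot]
  conv_rhs => rw [rot]
  rw [Real.cos_add, Real.sin_add]
  module

lemma inner_rot_rot_self (a : ℝ) (x : E) :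
    ⟪rot u e a x, rot u e a x⟫ = ⟪x, x⟫ := by
  have hpy := Real.sin_sq_add_cos_sq a
  simp only [rot, inner_add_left, inner_add_right, inner_sub_left, inner_sub_right,
    real_inner_smul_left, real_inner_smul_right,
    huu' hu he hue, hee' hu he hue, heu' hu he hue, hue,
    real_inner_comm x u, real_inner_comm x e]
  nlinarith [hpy]

lemma norm_rot (a : ℝ) (x : E) : ‖rot u e a x‖ = ‖x‖ := by
  have h := inner_rot_rot_self hu he hue a x
  rw [real_inner_self_eq_norm_sq, real_inner_self_eq_norm_sq] at h
  have h1 : (0:ℝ) ≤ ‖rot u e a x‖ := norm_nonneg _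
  have h2 : (0:ℝ) ≤ ‖x‖ := norm_nonneg _
  nlinarith

lemma rot_apply_u (a : ℝ) : rot u e a u = Real.cos a • u + Real.sin a • e := by
  simp only [rot, huu' hu he hue, hue, heu' hu he hue]
  module

end ortho

lemma abs_cos_sub_cos_le (a b : ℝ) : |Real.cos a - Real.cos b| ≤ |a - b| := by
  rw [Real.cos_sub_cos]
  rw [abs_mul, abs_mul, abs_neg]
  have h1 : |Real.sin ((a+b)/2)| ≤ 1 := Real.abs_sin_le_one _
  have h2 : |Real.sin ((a-b)/2)| ≤ |(a-b)/2| := Real.abs_sin_le_abs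
  have h3 : |(a-b)/2| = |a-b|/2 := by rw [abs_div]; norm_num
  calc |(2 : ℝ)| * |Real.sin ((a+b)/2)| * |Real.sin ((a-b)/2)|
      ≤ 2 * 1 * (|a-b|/2) := by
        rw [abs_two]
        apply mul_le_mul _ (h3 ▸ h2) (abs_nonneg _) (by positivity)
        nlinarith [abs_nonneg (Real.sin ((a+b)/2))]
    _ = |a - b| := by ring

lemma abs_sin_sub_sin_le (a b : ℝ) : |Real.sin a - Real.sin b| ≤ |a - b| := by
  rw [Real.sin_sub_sin]
  rw [abs_mul, abs_mul]
  have h1 : |Real.cos ((a+b)/2)| ≤ 1 := Real.abs_cos_le_one _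
  have h2 : |Real.sin ((a-b)/2)| ≤ |(a-b)/2| := Real.abs_sin_le_abs
  have h3 : |(a-b)/2| = |a-b|/2 := by rw [abs_div]; norm_num
  calc |(2 : ℝ)| * |Real.sin ((a-b)/2)| * |Real.cos ((a+b)/2)|
      ≤ 2 * (|a-b|/2) * 1 := by
        rw [abs_two]
        apply mul_le_mul _ h1 (abs_nonneg _) (by positivity)
        apply mul_le_mul_of_nonneg_left (h3 ▸ h2) (by norm_num)
    _ = |a - b| := by ring

lemma norm_rot_sub_rot (hu : ‖u‖ = 1) (he : ‖e‖ = 1) (a b : ℝ) (x : E) :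
    ‖rot u e a x - rot u e b x‖ ≤ 4 * |a - b| * ‖x‖ := by
  have hkey : rot u e a x - rot u e b x
      = (Real.cos a - Real.cos b) • (⟪u, x⟫ • u + ⟪e, x⟫ • e)
        + (Real.sin a - Real.sin b) • (⟪u, x⟫ • e - ⟪e, x⟫ • u) := by
    rw [rot, rot]; module
  have hiu : |⟪u, x⟫| ≤ ‖x‖ := by
    have := abs_real_inner_le_norm u x
    rwa [hu, one_mul] at this
  have hie : |⟪e, x⟫| ≤ ‖x‖ := by
    have := abs_real_inner_le_norm e x
    rwa [he, one_mul] at this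
  have hb1 : ‖⟪u, x⟫ • u + ⟪e, x⟫ • e‖ ≤ 2 * ‖x‖ := by
    calc ‖⟪u, x⟫ • u + ⟪e, x⟫ • e‖ ≤ ‖⟪u, x⟫ • u‖ + ‖⟪e, x⟫ • e‖ := norm_add_le _ _
      _ = |⟪u, x⟫| + |⟪e, x⟫| := by rw [norm_smul, norm_smul, hu, he]; simp [Real.norm_eq_abs]
      _ ≤ 2 * ‖x‖ := by linarith
  have hb2 : ‖⟪u, x⟫ • e - ⟪e, x⟫ • u‖ ≤ 2 * ‖x‖ := by
    calc ‖⟪u, x⟫ • e - ⟪e, x⟫ • u‖ ≤ ‖⟪u, x⟫ • e‖ + ‖⟪e, x⟫ • u‖ := norm_sub_le _ _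
      _ = |⟪u, x⟫| + |⟪e, x⟫| := by rw [norm_smul, norm_smul, hu, he]; simp [Real.norm_eq_abs]
      _ ≤ 2 * ‖x‖ := by linarith
  have hc := abs_cos_sub_cos_le a b
  have hs := abs_sin_sub_sin_le a b
  rw [hkey]
  calc ‖(Real.cos a - Real.cos b) • (⟪u, x⟫ • u + ⟪e, x⟫ • e)
        + (Real.sin a - Real.sin b) • (⟪u, x⟫ • e - ⟪e, x⟫ • u)‖
      ≤ ‖(Real.cos a - Real.cos b) • (⟪u, x⟫ • u + ⟪e, x⟫ • e)‖
        + ‖(Real.sin a - Real.sin b) • (⟪u, x⟫ • e - ⟪e, x⟫ • u)‖ := norm_add_le _ _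
    _ = |Real.cos a - Real.cos b| * ‖⟪u, x⟫ • u + ⟪e, x⟫ • e‖
        + |Real.sin a - Real.sin b| * ‖⟪u, x⟫ • e - ⟪e, x⟫ • u‖ := by
          rw [norm_smul, norm_smul]; simp [Real.norm_eq_abs]
    _ ≤ |a - b| * (2 * ‖x‖) + |a - b| * (2 * ‖x‖) := by
          apply add_le_add
          · exact mul_le_mul hc hb1 (norm_nonneg _) (abs_nonneg _)
          · exact mul_le_mul hs hb2 (norm_nonneg _) (abs_nonneg _)
    _ = 4 * |a - b| * ‖x‖ := by ring

lemma contDiff_rot (a : ℝ) : ContDiff ℝ 1 (rot u e a) := by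
  unfold rot
  have h1 : ContDiff ℝ 1 (fun x : E => ⟪u, x⟫) := (contDiff_const (c := u)).inner ℝ contDiff_id
  have h2 : ContDiff ℝ 1 (fun x : E => ⟪e, x⟫) := (contDiff_const (c := e)).inner ℝ contDiff_id
  exact (contDiff_id.add (contDiff_const.smul ((h1.smul contDiff_const).add
    (h2.smul contDiff_const)))).add
    (contDiff_const.smul ((h1.smul contDiff_const).sub (h2.smul contDiff_const)))


/-- One small interpolation step: a diffeomorphism that equals the rigid motion
`y ↦ γ' + Q (y - γ)` on `closedBall γ (2r)` and the identity outside `ball γ (5r)`. -/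
lemma step [CompleteSpace E] {Lf r ε₁ ε₂ : ℝ} (hLf : 0 ≤ Lf)
    (hlipf : ∀ s t : ℝ, |Real.smoothTransition s - Real.smoothTransition t| ≤ Lf * |s - t|)
    (hr : 0 < r) (γ γ' : E) (Q : E → E)
    (hQc : ContDiff ℝ 1 Q) (hQsub : ∀ x y : E, Q x - Q y = Q (x - y))
    (hQd : ∀ z : E, ‖Q z - z‖ ≤ ε₂ * ‖z‖)
    (hγ : ‖γ' - γ‖ ≤ ε₁ * r) (hε₁ : 0 ≤ ε₁) (hε₂ : 0 ≤ ε₂)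
    (hsmall : (Lf + 1) * (ε₁ + 7 * ε₂) ≤ 1/2) :
    ∃ φ ψ : E → E, ContDiff ℝ 1 φ ∧ ContDiff ℝ 1 ψ ∧
      Function.LeftInverse ψ φ ∧ Function.RightInverse ψ φ ∧
      (∀ y, ‖y - γ‖ ≤ 2*r → φ y = γ' + Q (y - γ)) ∧
      (∀ y, 5*r ≤ ‖y - γ‖ → φ y = y) ∧
      (∀ x y, dist (φ x) (φ y) ≤ (3/2) * dist x y) := by
  set χ : E → ℝ := fun y => Real.smoothTransition ((25*r^2 - ‖y - γ‖^2) / (21*r^2)) with hχdef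
  set w : E → E := fun y => (γ' - γ) + (Q (y - γ) - (y - γ)) with hwdef
  set F : E → E := fun y => χ y • w y with hFdef
  have hr2 : (0:ℝ) < 21 * r^2 := by positivity
  -- χ bounds
  have hχ01 : ∀ y, 0 ≤ χ y ∧ χ y ≤ 1 := fun y =>
    ⟨Real.smoothTransition.nonneg _, Real.smoothTransition.le_one _⟩
  have hχ_one : ∀ y, ‖y - γ‖ ≤ 2*r → χ y = 1 := by
    intro y hy
    apply Real.smoothTransition.one_of_one_le
    rw [le_div_iff₀ hr2]
    have h1 : ‖y - γ‖^2 ≤ 4*r^2 := by nlinarith [norm_nonneg (y - γ)]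
    nlinarith
  have hχ_zero : ∀ y, 5*r ≤ ‖y - γ‖ → χ y = 0 := by
    intro y hy
    apply Real.smoothTransition.zero_of_nonpos
    apply div_nonpos_of_nonpos_of_nonneg _ hr2.le
    have h1 : 25*r^2 ≤ ‖y - γ‖^2 := by nlinarith
    linarith
  -- w difference
  have hw_sub : ∀ x y, w x - w y = Q (x - y) - (x - y) := by
    intro x y
    simp only [hwdef]
    rw [show (γ' - γ) + (Q (x - γ) - (x - γ)) - ((γ' - γ) + (Q (y - γ) - (y - γ)))
        = (Q (x - γ) - Q (y - γ)) - (x - y) by abel, hQsub]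
    congr 1
    abel
  have hw_lip : ∀ x y, ‖w x - w y‖ ≤ ε₂ * ‖x - y‖ := by
    intro x y
    rw [hw_sub]
    exact hQd (x - y)
  -- w bound on the 6r-ball
  have hw_bd : ∀ y, ‖y - γ‖ ≤ 6*r → ‖w y‖ ≤ (ε₁ + 6*ε₂) * r := by
    intro y hy
    calc ‖w y‖ ≤ ‖γ' - γ‖ + ‖Q (y - γ) - (y - γ)‖ := norm_add_le _ _
      _ ≤ ε₁ * r + ε₂ * ‖y - γ‖ := add_le_add hγ (hQd _)
      _ ≤ ε₁ * r + ε₂ * (6*r) := by nlinarith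
      _ = (ε₁ + 6*ε₂) * r := by ring
  -- χ difference on the 6r-ball
  have hχ_lip : ∀ x y, ‖x - γ‖ ≤ 6*r → ‖y - γ‖ ≤ 6*r →
      |χ x - χ y| ≤ Lf * (12 / (21*r)) * ‖x - y‖ := by
    intro x y hx hy
    have h1 := hlipf ((25*r^2 - ‖x - γ‖^2) / (21*r^2)) ((25*r^2 - ‖y - γ‖^2) / (21*r^2))
    have h2 : (25*r^2 - ‖x - γ‖^2) / (21*r^2) - (25*r^2 - ‖y - γ‖^2) / (21*r^2)
        = (‖y - γ‖^2 - ‖x - γ‖^2) / (21*r^2) := by ring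
    rw [h2] at h1
    have h3 : |‖y - γ‖^2 - ‖x - γ‖^2| ≤ 12*r * ‖x - y‖ := by
      have hdiff : |‖y - γ‖ - ‖x - γ‖| ≤ ‖x - y‖ := by
        rw [abs_sub_comm]
        have := abs_norm_sub_norm_le (x - γ) (y - γ)
        calc |‖x - γ‖ - ‖y - γ‖| ≤ ‖(x - γ) - (y - γ)‖ := this
          _ = ‖x - y‖ := by congr 1; abel
      have hfactor : ‖y - γ‖^2 - ‖x - γ‖^2
          = (‖y - γ‖ + ‖x - γ‖) * (‖y - γ‖ - ‖x - γ‖) := by ring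
      rw [hfactor, abs_mul]
      have hsum : |‖y - γ‖ + ‖x - γ‖| ≤ 12*r := by
        rw [abs_of_nonneg (by positivity)]
        linarith
      have h0 : (0:ℝ) ≤ |‖y - γ‖ - ‖x - γ‖| := abs_nonneg _
      nlinarith [abs_nonneg (‖y - γ‖ + ‖x - γ‖), norm_nonneg (x - y)]
    calc |χ x - χ y| ≤ Lf * (|‖y - γ‖^2 - ‖x - γ‖^2| / (21*r^2)) := by
          rw [abs_div] at h1
          rwa [abs_of_pos hr2] at h1
      _ ≤ Lf * (12*r * ‖x - y‖ / (21*r^2)) := by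
          apply mul_le_mul_of_nonneg_left _ hLf
          gcongr
      _ = Lf * (12 / (21*r)) * ‖x - y‖ := by
          have hrne : r ≠ 0 := hr.ne'
          field_simp
  -- the key Lipschitz estimate for F
  have hkey : ∀ x y, ‖x - γ‖ < 5*r → ‖F x - F y‖ ≤ (1/2) * ‖x - y‖ := by
    intro x y hx
    have hFxy : F x - F y = χ x • (w x - w y) + (χ x - χ y) • w y := by
      simp only [hFdef, smul_sub, sub_smul]; abel
    rcases le_or_gt (‖y - γ‖) (6*r) with hy | hy
    · -- main case
      have t1 : ‖χ x • (w x - w y)‖ ≤ ε₂ * ‖x - y‖ := by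
        rw [norm_smul, Real.norm_eq_abs, abs_of_nonneg (hχ01 x).1]
        calc χ x * ‖w x - w y‖ ≤ 1 * (ε₂ * ‖x - y‖) := by
              apply mul_le_mul (hχ01 x).2 (hw_lip x y) (norm_nonneg _) zero_le_one
          _ = ε₂ * ‖x - y‖ := one_mul _
      have t2 : ‖(χ x - χ y) • w y‖ ≤ Lf * (12 / (21*r)) * ‖x - y‖ * ((ε₁ + 6*ε₂) * r) := by
        rw [norm_smul, Real.norm_eq_abs]
        apply mul_le_mul (hχ_lip x y (by linarith) hy) (hw_bd y hy) (norm_nonneg _)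
        positivity
      have hexp : Lf * (12 / (21*r)) * ‖x - y‖ * ((ε₁ + 6*ε₂) * r)
          = (Lf * (12/21) * (ε₁ + 6*ε₂)) * ‖x - y‖ := by field_simp
      rw [hexp] at t2
      have htot : ‖F x - F y‖ ≤ (ε₂ + Lf * (12/21) * (ε₁ + 6*ε₂)) * ‖x - y‖ := by
        rw [hFxy]
        calc ‖χ x • (w x - w y) + (χ x - χ y) • w y‖
            ≤ ‖χ x • (w x - w y)‖ + ‖(χ x - χ y) • w y‖ := norm_add_le _ _
          _ ≤ ε₂ * ‖x - y‖ + Lf * (12/21) * (ε₁ + 6*ε₂) * ‖x - y‖ := add_le_add t1 t2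
          _ = (ε₂ + Lf * (12/21) * (ε₁ + 6*ε₂)) * ‖x - y‖ := by ring
      have hco : ε₂ + Lf * (12/21) * (ε₁ + 6*ε₂) ≤ 1/2 := by
        nlinarith [mul_nonneg hLf hε₁, mul_nonneg hLf hε₂]
      calc ‖F x - F y‖ ≤ (ε₂ + Lf * (12/21) * (ε₁ + 6*ε₂)) * ‖x - y‖ := htot
        _ ≤ (1/2) * ‖x - y‖ := mul_le_mul_of_nonneg_right hco (norm_nonneg _)
    · -- far case : F y = 0 and ‖x - y‖ > r
      have hFy : F y = 0 := by
        simp only [hFdef]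
        rw [hχ_zero y (by linarith)]
        simp
      have hxy : r < ‖x - y‖ := by
        have : ‖y - γ‖ - ‖x - γ‖ ≤ ‖x - y‖ := by
          have := norm_sub_le_norm_sub_add_norm_sub y x γ
          -- ‖y - γ‖ ≤ ‖y - x‖ + ‖x - γ‖
          have h := norm_sub_le (y - x) (γ - x)
          have h2 : ‖y - γ‖ ≤ ‖y - x‖ + ‖x - γ‖ := by
            calc ‖y - γ‖ = ‖(y - x) + (x - γ)‖ := by congr 1; abel
              _ ≤ ‖y - x‖ + ‖x - γ‖ := norm_add_le _ _
          rw [norm_sub_rev y x] at h2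
          linarith
        linarith
      have hFx : ‖F x‖ ≤ (ε₁ + 6*ε₂) * r := by
        simp only [hFdef]
        rw [norm_smul, Real.norm_eq_abs, abs_of_nonneg (hχ01 x).1]
        calc χ x * ‖w x‖ ≤ 1 * ((ε₁ + 6*ε₂) * r) := by
              apply mul_le_mul (hχ01 x).2 (hw_bd x (by linarith)) (norm_nonneg _) zero_le_one
          _ = (ε₁ + 6*ε₂) * r := one_mul _
      have hsm : (ε₁ + 6*ε₂) ≤ 1/2 := by
        nlinarith [mul_nonneg hLf hε₁, mul_nonneg hLf hε₂]
      rw [hFy, sub_zero]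
      calc ‖F x‖ ≤ (ε₁ + 6*ε₂) * r := hFx
        _ ≤ (1/2) * r := by nlinarith
        _ ≤ (1/2) * ‖x - y‖ := by linarith
  have hFlip : ∀ x y, dist (F x) (F y) ≤ (1/2) * dist x y := by
    intro x y
    rw [dist_eq_norm, dist_eq_norm]
    rcases lt_or_ge (‖x - γ‖) (5*r) with hx | hx
    · exact hkey x y hx
    rcases lt_or_ge (‖y - γ‖) (5*r) with hy | hy
    · rw [norm_sub_rev, norm_sub_rev x y]
      exact hkey y x hy
    · have h1 : F x = 0 := by simp only [hFdef]; rw [hχ_zero x hx]; simp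
      have h2 : F y = 0 := by simp only [hFdef]; rw [hχ_zero y hy]; simp
      rw [h1, h2, sub_zero, norm_zero]
      positivity
  -- C¹ of F
  have hχc : ContDiff ℝ 1 χ := by
    apply Real.smoothTransition.contDiff.comp
    apply ContDiff.div_const
    apply ContDiff.sub contDiff_const
    have : (fun y : E => ‖y - γ‖^2) = fun y : E => ⟪y - γ, y - γ⟫ := by
      funext y
      rw [real_inner_self_eq_norm_sq]
    rw [this]
    exact (contDiff_id.sub contDiff_const).inner ℝ (contDiff_id.sub contDiff_const)
  have hwc : ContDiff ℝ 1 w := by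
    apply ContDiff.add contDiff_const
    exact (hQc.comp (contDiff_id.sub contDiff_const)).sub (contDiff_id.sub contDiff_const)
  have hFc : ContDiff ℝ 1 F := hχc.smul hwc
  set φ : E → E := fun y => y + F y with hφdef
  have hφc : ContDiff ℝ 1 φ := contDiff_id.add hFc
  obtain ⟨ψ, hψc, hl, hrr⟩ := exists_inverse hFc hFlip
  refine ⟨φ, ψ, hφc, hψc, hl, hrr, ?_, ?_, ?_⟩
  · intro y hy
    simp only [hφdef, hFdef]
    rw [hχ_one y hy, one_smul, hwdef]
    show y + ((γ' - γ) + (Q (y - γ) - (y - γ))) = γ' + Q (y - γ)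
    abel
  · intro y hy
    simp only [hφdef, hFdef]
    rw [hχ_zero y hy, zero_smul, add_zero]
  · intro x y
    have h1 : dist (φ x) (φ y) ≤ dist x y + dist (F x) (F y) := by
      rw [dist_eq_norm, dist_eq_norm, dist_eq_norm]
      calc ‖φ x - φ y‖ = ‖(x - y) + (F x - F y)‖ := by simp only [hφdef]; congr 1; abel
        _ ≤ ‖x - y‖ + ‖F x - F y‖ := norm_add_le _ _
    have h2 := hFlip x y
    linarith


end Rot

section Euclid

variable {d : ℕ}
local notation "Ed" => EuclideanSpace ℝ (Fin d)

lemma midpoint_formula (x y : Ed) : midpoint ℝ x y = (1/2 : ℝ) • x + (1/2 : ℝ) • y := by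
  rw [midpoint_eq_smul_add, invOf_eq_inv, smul_add]
  norm_num

lemma mem_rigidCyl_midpoint (a b : Ed) {ρ : ℝ} (hρ : 0 < ρ) :
    midpoint ℝ a b ∈ rigidCyl a b ρ := by
  refine ⟨0, 0, by norm_num, by simp, by simpa using hρ, by simp⟩

lemma rigidCyl_symm_mem (a b : Ed) (ρ : ℝ) {x : Ed} (hx : x ∈ rigidCyl a b ρ) :
    midpoint ℝ a b + (midpoint ℝ a b - x) ∈ rigidCyl a b ρ := by
  obtain ⟨s, v, hs, hv, hnv, hxeq⟩ := hx
  refine ⟨-s, -v, by simpa using hs, by simpa using hv, by simpa using hnv, ?_⟩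
  rw [hxeq]
  rw [show (-s / 2) = -(s/2) by ring]
  module

/-- Image of a rigid cylinder under a rigid affine map. -/
lemma rigidCyl_image (a b : Ed) (ρ : ℝ) (z : Ed) (A A' : Ed → Ed)
    (hadd : ∀ x y : Ed, A (x + y) = A x + A y)
    (hsmul : ∀ (t : ℝ) (x : Ed), A (t • x) = t • A x)
    (hnorm : ∀ x : Ed, ‖A x‖ = ‖x‖)
    (hAA' : ∀ x : Ed, A (A' x) = x) :
    (fun x => z + A (x - midpoint ℝ a b)) '' rigidCyl a b ρ
      = rigidCyl (z + A (a - midpoint ℝ a b)) (z + A (b - midpoint ℝ a b)) ρ := by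
  set m := midpoint ℝ a b with hm
  have hA0 : A 0 = 0 := by
    have := hsmul 0 0
    simpa using this
  have hAsub : ∀ x y : Ed, A (x - y) = A x - A y := by
    intro x y
    have h : x - y = x + (-1 : ℝ) • y := by module
    rw [h, hadd, hsmul]
    module
  have hinner : ∀ x y : Ed, (⟪A x, A y⟫ : ℝ) = ⟪x, y⟫ := by
    intro x y
    rw [real_inner_eq_norm_add_mul_self_sub_norm_mul_self_sub_norm_mul_self_div_two,
      real_inner_eq_norm_add_mul_self_sub_norm_mul_self_sub_norm_mul_self_div_two (x := x),
      ← hadd, hnorm, hnorm, hnorm]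
  have hdiff : (z + A (b - m)) - (z + A (a - m)) = A (b - a) := by
    have h1 : z + A (b - m) - (z + A (a - m)) = A (b - m) - A (a - m) := by abel
    rw [h1, ← hAsub]
    congr 1
    abel
  have hmid : midpoint ℝ (z + A (a - m)) (z + A (b - m)) = z := by
    rw [midpoint_formula]
    have hsum : A (a - m) + A (b - m) = 0 := by
      rw [← hadd]
      have : (a - m) + (b - m) = (0 : Ed) := by
        rw [hm, midpoint_formula]
        module
      rw [this, hA0]
    have h1 : A (b - m) = - A (a - m) := by
      have := hsum
      linear_combination (norm := module) this
    rw [h1]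
    module
  ext y
  constructor
  · rintro ⟨x, ⟨s, v, hs, hv, hnv, hxeq⟩, rfl⟩
    rw [← hm] at hxeq
    refine ⟨s, A v, hs, ?_, ?_, ?_⟩
    · rw [hdiff, hinner, hv]
    · rw [hnorm]; exact hnv
    · rw [hmid, hdiff, hxeq]
      show z + A (m + (s / 2) • (b - a) + v - m) = z + (s / 2) • A (b - a) + A v
      have h9 : m + (s / 2) • (b - a) + v - m = (s/2) • (b - a) + v := by abel
      rw [h9, hadd, hsmul]
      abel
  · rintro ⟨s, v', hs, hv, hnv, hyeq⟩
    rw [hmid, hdiff] at hyeq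
    rw [hdiff] at hv
    refine ⟨m + (s/2) • (b - a) + A' v', ⟨s, A' v', hs, ?_, ?_, rfl⟩, ?_⟩
    · have h1 : (⟪A' v', b - a⟫ : ℝ) = ⟪A (A' v'), A (b - a)⟫ := (hinner _ _).symm
      rw [h1, hAA']
      exact hv
    · have h1 : ‖A' v'‖ = ‖A (A' v')‖ := (hnorm _).symm
      rw [h1, hAA']
      exact hnv
    · show z + A (m + (s / 2) • (b - a) + A' v' - m) = y
      have h9 : m + (s / 2) • (b - a) + A' v' - m = (s/2) • (b - a) + A' v' := by abel
      rw [h9, hadd, hsmul, hAA', hyeq]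
      abel

lemma exists_unit_perp (hd : 2 ≤ d) (u : Ed) (hu : u ≠ 0) :
    ∃ e : Ed, ‖e‖ = 1 ∧ (⟪u, e⟫ : ℝ) = 0 := by
  have hspan : Submodule.span ℝ ({u} : Set Ed) ≠ ⊤ := by
    intro h
    have h1 : Module.finrank ℝ (Submodule.span ℝ ({u} : Set Ed)) = 1 :=
      finrank_span_singleton hu
    rw [h] at h1
    have h2 : Module.finrank ℝ (⊤ : Submodule ℝ Ed) = d := by
      rw [finrank_top]
      exact finrank_euclideanSpace_fin
    omega
  obtain ⟨v, hv⟩ : ∃ v : Ed, v ∉ Submodule.span ℝ ({u} : Set Ed) := by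
    by_contra hall
    push_neg at hall
    exact hspan (Submodule.eq_top_iff'.mpr hall)
  have huu : (⟪u, u⟫ : ℝ) ≠ 0 := inner_self_ne_zero.mpr hu
  set e' : Ed := v - ((⟪u, v⟫ : ℝ) / ⟪u, u⟫) • u with he'
  have he'0 : e' ≠ 0 := by
    intro h
    apply hv
    have : v = ((⟪u, v⟫ : ℝ) / ⟪u, u⟫) • u := by
      have := h
      rw [he'] at this
      linear_combination (norm := module) this
    rw [this]
    exact Submodule.smul_mem _ _ (Submodule.mem_span_singleton_self u)
  have hperp : (⟪u, e'⟫ : ℝ) = 0 := by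
    rw [he', inner_sub_right, real_inner_smul_right, div_mul_cancel₀ _ huu, sub_self]
  refine ⟨‖e'‖⁻¹ • e', ?_, ?_⟩
  · rw [norm_smul, norm_inv, norm_norm]
    exact inv_mul_cancel₀ (norm_ne_zero_iff.mpr he'0)
  · rw [real_inner_smul_right, hperp, mul_zero]

lemma sub_midpoint_left (a b : Ed) : a - midpoint ℝ a b = (-(1/2) : ℝ) • (b - a) := by
  rw [midpoint_formula]; module

lemma sub_midpoint_right (a b : Ed) : b - midpoint ℝ a b = ((1/2) : ℝ) • (b - a) := by
  rw [midpoint_formula]; module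


end Euclid

end CylAux

open CylAux

/-- **Rigid motion of cylinders along elongated neighbourhoods**: for every `c > 0` there is
`K > 0`, depending only on `c` and `d ≥ 2`, such that for all `p, q ∈ ℝ^d`, `r > 0` with
`|p - q| / r ≤ c`, and all isometric rigid solid cylinders `C_p ⊆ B(p,r)`, `C_q ⊆ B(q,r)`,
there is a `C¹` diffeomorphism `φ` of `ℝ^d` supported in `E(p,q;10r)` mapping `C_p`
isometrically onto `C_q` with `[φ]_Lip ≤ K`. -/
theorem cylinder_isometry_two_balls (d : ℕ) (hd : 2 ≤ d) (c : ℝ) (hc : 0 < c) :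
    ∃ K : ℝ, 0 < K ∧
      ∀ (p q : EuclideanSpace ℝ (Fin d)) (r : ℝ), 0 < r → dist p q ≤ c * r →
      ∀ (a b a' b' : EuclideanSpace ℝ (Fin d)) (ρ ρ' : ℝ),
        a ≠ b → 0 < ρ → a' ≠ b' → 0 < ρ' →
        rigidCyl a b ρ ⊆ Metric.ball p r → rigidCyl a' b' ρ' ⊆ Metric.ball q r →
        (∃ ι : EuclideanSpace ℝ (Fin d) ≃ᵢ EuclideanSpace ℝ (Fin d),
          ι '' rigidCyl a b ρ = rigidCyl a' b' ρ') →
        ∃ φ ψ : EuclideanSpace ℝ (Fin d) → EuclideanSpace ℝ (Fin d),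
          ContDiff ℝ 1 φ ∧ ContDiff ℝ 1 ψ ∧
          Function.LeftInverse ψ φ ∧ Function.RightInverse ψ φ ∧
          closure {x | φ x ≠ x} ⊆ elongNbhd p q (10 * r) ∧
          φ '' rigidCyl a b ρ = rigidCyl a' b' ρ' ∧
          (∀ x ∈ rigidCyl a b ρ, ∀ y ∈ rigidCyl a b ρ, dist (φ x) (φ y) = dist x y) ∧
          ∀ x y, dist (φ x) (φ y) ≤ K * dist x y := by
  classical
  obtain ⟨Lf, hLf0, hlipf⟩ := exists_lip_smoothTransition
  set B : ℝ := (Lf + 1) * (c + 100) with hBdef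
  have hB0 : 0 < B := by
    apply mul_pos <;> linarith
  set N : ℕ := ⌈2 * B⌉₊ with hNdef
  have hN0 : 0 < N := Nat.ceil_pos.mpr (by linarith)
  have hNR : (0:ℝ) < (N:ℝ) := Nat.cast_pos.mpr hN0
  have h2B : 2 * B ≤ (N:ℝ) := Nat.le_ceil _
  refine ⟨(3/2)^N, by positivity, ?_⟩
  intro p q r hr hpq a b a' b' ρ ρ' hab hρ hab' hρ' hCp hCq hexι
  obtain ⟨ι, hι⟩ := hexι
  set m : EuclideanSpace ℝ (Fin d) := midpoint ℝ a b with hm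
  have hmC : m ∈ rigidCyl a b ρ := mem_rigidCyl_midpoint a b hρ
  have hmp : dist m p < r := by
    have := hCp hmC
    rwa [Metric.mem_ball] at this
  set m' : EuclideanSpace ℝ (Fin d) := ι m with hm'
  have hm'C : m' ∈ rigidCyl a' b' ρ' := by
    rw [hm', ← hι]
    exact Set.mem_image_of_mem _ hmC
  have hm'q : dist m' q < r := by
    have := hCq hm'C
    rwa [Metric.mem_ball] at this
  -- linear part of ι
  set Bι := ι.toRealLinearIsometryEquiv with hBι
  have hιx : ∀ x : EuclideanSpace ℝ (Fin d), ι x = ι m + Bι (x - m) := by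
    intro x
    have h1 : (Bι : EuclideanSpace ℝ (Fin d) → EuclideanSpace ℝ (Fin d)) (x - m)
        = Bι x - Bι m := map_sub _ _ _
    rw [h1, hBι, IsometryEquiv.toRealLinearIsometryEquiv_apply,
      IsometryEquiv.toRealLinearIsometryEquiv_apply]
    abel
  -- unit axis and its image
  have hba : b - a ≠ 0 := sub_ne_zero.mpr (Ne.symm hab)
  have hnba : (0:ℝ) < ‖b - a‖ := norm_pos_iff.mpr hba
  set u : EuclideanSpace ℝ (Fin d) := ‖b - a‖⁻¹ • (b - a) with hudef
  have hu : ‖u‖ = 1 := by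
    rw [hudef, norm_smul, norm_inv, norm_norm]
    exact inv_mul_cancel₀ hnba.ne'
  have hu0 : u ≠ 0 := by
    intro h
    rw [h, norm_zero] at hu
    norm_num at hu
  set w : EuclideanSpace ℝ (Fin d) := Bι u with hwdef
  have hwn : ‖w‖ = 1 := by rw [hwdef, Bι.norm_map]; exact hu
  set c₀ : ℝ := ⟪u, w⟫ with hc₀def
  have hc₀abs : |c₀| ≤ 1 := by
    have := abs_real_inner_le_norm u w
    rwa [hu, hwn, one_mul] at this
  have hc₀lb : -1 ≤ c₀ := (abs_le.mp hc₀abs).1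
  have hc₀ub : c₀ ≤ 1 := (abs_le.mp hc₀abs).2
  set θ : ℝ := Real.arccos c₀ with hθdef
  have hθ0 : 0 ≤ θ := Real.arccos_nonneg _
  have hθπ : θ ≤ π := Real.arccos_le_pi _
  have hcosθ : Real.cos θ = c₀ := Real.cos_arccos hc₀lb hc₀ub
  -- orthonormal completion
  obtain ⟨e, he1, he2, hrotu⟩ : ∃ e : EuclideanSpace ℝ (Fin d), ‖e‖ = 1 ∧ (⟪u, e⟫ : ℝ) = 0 ∧
      Real.cos θ • u + Real.sin θ • e = w := by
    rcases eq_or_ne (w - c₀ • u) 0 with h0 | h0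
    · obtain ⟨e, he1, he2⟩ := exists_unit_perp hd u hu0
      have hw' : w = c₀ • u := by
        have := sub_eq_zero.mp h0
        exact this
      have hc₀sq : c₀^2 = 1 := by
        have h1 : ‖w‖ = |c₀| * ‖u‖ := by rw [hw', norm_smul, Real.norm_eq_abs]
        rw [hwn, hu, mul_one] at h1
        have : |c₀| = 1 := h1.symm
        calc c₀^2 = |c₀|^2 := (sq_abs c₀).symm
          _ = 1 := by rw [this]; norm_num
      have hsinθ : Real.sin θ = 0 := by
        rw [hθdef, Real.sin_arccos]
        rw [show (1 : ℝ) - c₀^2 = 0 by linarith]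
        exact Real.sqrt_zero
      exact ⟨e, he1, he2, by rw [hcosθ, hsinθ, zero_smul, add_zero, ← hw']⟩
    · set s₀ : ℝ := ‖w - c₀ • u‖ with hs₀def
      have hs₀pos : 0 < s₀ := norm_pos_iff.mpr h0
      have huu1 : (⟪u, u⟫ : ℝ) = 1 := by
        rw [real_inner_self_eq_norm_sq, hu]; norm_num
      have hcomm : (inner ℝ w u : ℝ) = c₀ := by rw [real_inner_comm]; try exact hc₀def.symm
      have hs₀sq : s₀^2 = 1 - c₀^2 := by
        rw [hs₀def, norm_sub_sq_real, real_inner_smul_right, norm_smul, Real.norm_eq_abs,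
          hcomm, hwn, hu]
        try rw [mul_pow, sq_abs]
        try ring
        try nlinarith [sq_abs c₀]
      have hsinθ : Real.sin θ = s₀ := by
        rw [hθdef, Real.sin_arccos, ← hs₀sq, Real.sqrt_sq hs₀pos.le]
      refine ⟨s₀⁻¹ • (w - c₀ • u), ?_, ?_, ?_⟩
      · rw [norm_smul, norm_inv, norm_norm, ← hs₀def]
        exact inv_mul_cancel₀ hs₀pos.ne'
      · rw [real_inner_smul_right, inner_sub_right, real_inner_smul_right, huu1,
          mul_one, ← hc₀def, sub_self, mul_zero]
      · rw [hcosθ, hsinθ, smul_inv_smul₀ hs₀pos.ne']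
        abel
  have hrotu' : rot u e θ u = w := by
    rw [rot_apply_u hu he1 he2, hrotu]
  -- distance bounds
  have hmm' : ‖m' - m‖ ≤ (c + 2) * r := by
    have h1 : dist m' m ≤ dist m' q + dist q p + dist p m := dist_triangle4 m' q p m
    have h2 : dist q p = dist p q := dist_comm q p
    have h3 : dist p m = dist m p := dist_comm p m
    rw [← dist_eq_norm]
    rw [h2, h3] at h1
    linarith
  -- path data
  set γk : ℕ → EuclideanSpace ℝ (Fin d) := fun k => m + ((k : ℝ)/(N:ℝ)) • (m' - m) with hγk
  set gk : ℕ → EuclideanSpace ℝ (Fin d) → EuclideanSpace ℝ (Fin d) :=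
    fun k x => γk k + rot u e ((k : ℝ) * θ / (N:ℝ)) (x - m) with hgk
  set ε₁ : ℝ := (c + 2)/(N:ℝ) with hε₁def
  set ε₂ : ℝ := 4 * π / (N:ℝ) with hε₂def
  have hε₁0 : 0 ≤ ε₁ := by positivity
  have hε₂0 : 0 ≤ ε₂ := by positivity
  have hsmall : (Lf + 1) * (ε₁ + 7 * ε₂) ≤ 1/2 := by
    have hπ : π < 3.15 := Real.pi_lt_d2
    have h1 : ε₁ + 7 * ε₂ = (c + 2 + 28 * π)/(N:ℝ) := by
      rw [hε₁def, hε₂def]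
      field_simp
      ring
    rw [h1]
    have h2 : (Lf + 1) * ((c + 2 + 28 * π)/(N:ℝ)) = ((Lf + 1) * (c + 2 + 28*π))/(N:ℝ) := by
      ring
    rw [h2, div_le_iff₀ hNR]
    have h3 : (Lf + 1) * (c + 2 + 28*π) ≤ B := by
      rw [hBdef]
      apply mul_le_mul_of_nonneg_left _ (by linarith)
      nlinarith
    nlinarith
  have hQsub : ∀ x y : EuclideanSpace ℝ (Fin d),
      rot u e (θ/(N:ℝ)) x - rot u e (θ/(N:ℝ)) y = rot u e (θ/(N:ℝ)) (x - y) :=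
    fun x y => (rot_sub _ x y).symm
  have hQd : ∀ z : EuclideanSpace ℝ (Fin d), ‖rot u e (θ/(N:ℝ)) z - z‖ ≤ ε₂ * ‖z‖ := by
    intro z
    have h1 : ‖rot u e (θ/(N:ℝ)) z - rot u e 0 z‖ ≤ 4 * |θ/(N:ℝ) - 0| * ‖z‖ :=
      norm_rot_sub_rot hu he1 (θ/(N:ℝ)) 0 z
    rw [rot_zero] at h1
    have h2 : |θ/(N:ℝ) - 0| = θ/(N:ℝ) := by
      rw [sub_zero, abs_of_nonneg (by positivity)]
    rw [h2] at h1
    calc ‖rot u e (θ/(N:ℝ)) z - z‖ ≤ 4 * (θ/(N:ℝ)) * ‖z‖ := h1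
      _ ≤ ε₂ * ‖z‖ := by
          apply mul_le_mul_of_nonneg_right _ (norm_nonneg z)
          have h9 : ε₂ = 4 * (π/(N:ℝ)) := by rw [hε₂def]; ring
          rw [h9]
          have h10 : θ/(N:ℝ) ≤ π/(N:ℝ) := by gcongr
          linarith
  have hγdiff : ∀ k : ℕ, ‖γk (k+1) - γk k‖ ≤ ε₁ * r := by
    intro k
    have h1 : γk (k+1) - γk k = ((1:ℝ)/(N:ℝ)) • (m' - m) := by
      simp only [hγk]
      have hcast : ((k+1 : ℕ) : ℝ)/(N:ℝ) = (k:ℝ)/(N:ℝ) + 1/(N:ℝ) := by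
        push_cast
        ring
      simp only [hcast]
      module
    rw [h1, norm_smul, Real.norm_eq_abs, abs_of_nonneg (by positivity : (0:ℝ) ≤ 1/(N:ℝ))]
    calc 1/(N:ℝ) * ‖m' - m‖ ≤ 1/(N:ℝ) * ((c+2)*r) := by
          apply mul_le_mul_of_nonneg_left hmm' (by positivity)
      _ = ε₁ * r := by rw [hε₁def]; ring
  have hsteps : ∀ k : ℕ, ∃ φk ψk : EuclideanSpace ℝ (Fin d) → EuclideanSpace ℝ (Fin d),
      ContDiff ℝ 1 φk ∧ ContDiff ℝ 1 ψk ∧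
      Function.LeftInverse ψk φk ∧ Function.RightInverse ψk φk ∧
      (∀ y, ‖y - γk k‖ ≤ 2*r → φk y = γk (k+1) + rot u e (θ/(N:ℝ)) (y - γk k)) ∧
      (∀ y, 5*r ≤ ‖y - γk k‖ → φk y = y) ∧
      (∀ x y, dist (φk x) (φk y) ≤ (3/2) * dist x y) := by
    intro k
    exact step hLf0 hlipf hr (γk k) (γk (k+1)) (rot u e (θ/(N:ℝ)))
      (contDiff_rot _) hQsub hQd (hγdiff k) hε₁0 hε₂0 hsmall
  choose φs ψs hφc hψc hlinv hrinv hball hout hliplocal using hsteps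
  -- tracking along the cylinder
  have hxm2r : ∀ x ∈ rigidCyl a b ρ, ‖x - m‖ ≤ 2*r := by
    intro x hx
    have h1 : dist x p < r := by
      have := hCp hx
      rwa [Metric.mem_ball] at this
    calc ‖x - m‖ = dist x m := (dist_eq_norm _ _).symm
      _ ≤ dist x p + dist p m := dist_triangle x p m
      _ ≤ r + r := by
          have := dist_comm p m
          rw [this]
          linarith
      _ = 2*r := by ring
  have htrack : ∀ x ∈ rigidCyl a b ρ, compIter φs N x = gk N x := by
    intro x hx
    apply compIter_track
    · simp only [hgk, hγk, Nat.cast_zero, zero_div, zero_smul, add_zero, zero_mul]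
      rw [rot_zero]
      abel
    · intro k
      have hdist : ‖gk k x - γk k‖ ≤ 2*r := by
        have h1 : gk k x - γk k = rot u e ((k : ℝ) * θ / (N:ℝ)) (x - m) := by
          simp only [hgk]
          abel
        rw [h1, norm_rot hu he1 he2]
        exact hxm2r x hx
      rw [hball k _ hdist]
      have h1 : gk k x - γk k = rot u e ((k : ℝ) * θ / (N:ℝ)) (x - m) := by
        simp only [hgk]; abel
      rw [h1, rot_rot hu he1 he2]
      have hang : θ/(N:ℝ) + (k:ℝ) * θ / (N:ℝ) = ((k+1 : ℕ) : ℝ) * θ / (N:ℝ) := by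
        push_cast
        ring
      rw [hang]
  have hgNfun : gk N = fun x => m' + rot u e θ (x - m) := by
    funext x
    simp only [hgk, hγk]
    have h1 : ((N:ℕ) : ℝ)/(N:ℝ) = 1 := div_self hNR.ne'
    have h2 : ((N:ℕ) : ℝ) * θ / (N:ℝ) = θ := by
      rw [mul_comm, mul_div_assoc, div_self hNR.ne', mul_one]
    rw [h1, h2, one_smul]
    abel
  -- conclusion
  refine ⟨compIter φs N, compIterInv ψs N, compIter_contDiff hφc N,
    compIterInv_contDiff hψc N, compIter_leftInverse hlinv N,
    compIter_rightInverse hrinv N, ?_, ?_, ?_, ?_⟩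
  · -- support
    have hmove : {x | compIter φs N x ≠ x}
        ⊆ ⋃ k ∈ Finset.range N, Metric.closedBall (γk k) (5*r) := by
      intro x hx
      by_contra hxT
      apply hx
      apply compIter_fix
      intro k hk
      apply hout k
      have hnot : x ∉ Metric.closedBall (γk k) (5*r) := by
        intro hmem
        exact hxT (Set.mem_biUnion (Finset.mem_range.mpr hk) hmem)
      rw [Metric.mem_closedBall, not_le] at hnot
      rw [← dist_eq_norm]
      exact hnot.le
    have hclosed : IsClosed (⋃ k ∈ Finset.range N, Metric.closedBall (γk k) (5*r)) :=
      Set.Finite.isClosed_biUnion (Finset.range N).finite_toSet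
        (fun k _ => Metric.isClosed_closedBall)
    refine (closure_minimal hmove hclosed).trans ?_
    intro x hx
    simp only [Set.mem_iUnion, exists_prop] at hx
    obtain ⟨k, hk, hxk⟩ := hx
    rw [Finset.mem_range] at hk
    set s : ℝ := (k:ℝ)/(N:ℝ) with hs
    have hs0 : 0 ≤ s := by positivity
    have hs1 : s ≤ 1 := by
      rw [hs, div_le_one hNR]
      exact_mod_cast hk.le
    refine ⟨1 - s, ⟨by linarith, by linarith⟩, ?_⟩
    have h1 : (1:ℝ) - (1 - s) = s := by ring
    rw [h1]
    have h2 : γk k - ((1-s) • p + s • q) = (1-s) • (m - p) + s • (m' - q) := by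
      simp only [hγk]
      rw [← hs]
      module
    have h3 : dist (γk k) ((1-s) • p + s • q) ≤ r := by
      rw [dist_eq_norm, h2]
      calc ‖(1-s) • (m - p) + s • (m' - q)‖
          ≤ ‖(1-s) • (m - p)‖ + ‖s • (m' - q)‖ := norm_add_le _ _
        _ = (1-s) * ‖m - p‖ + s * ‖m' - q‖ := by
            rw [norm_smul, norm_smul, Real.norm_eq_abs, Real.norm_eq_abs,
              abs_of_nonneg (by linarith), abs_of_nonneg hs0]
        _ ≤ (1-s) * r + s * r := by
            have hmp' : ‖m - p‖ ≤ r := by rw [← dist_eq_norm]; exact hmp.le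
            have hm'q' : ‖m' - q‖ ≤ r := by rw [← dist_eq_norm]; exact hm'q.le
            apply add_le_add
            · exact mul_le_mul_of_nonneg_left hmp' (by linarith)
            · exact mul_le_mul_of_nonneg_left hm'q' hs0
        _ = r := by ring
    have h4 : dist x (γk k) ≤ 5*r := by rwa [Metric.mem_closedBall] at hxk
    calc dist x ((1-s) • p + s • q)
        ≤ dist x (γk k) + dist (γk k) ((1-s) • p + s • q) := dist_triangle _ _ _
      _ ≤ 5*r + r := add_le_add h4 h3
      _ < 10 * r := by linarith
  · -- image
    have himg : compIter φs N '' rigidCyl a b ρ = gk N '' rigidCyl a b ρ :=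
      Set.image_congr htrack
    rw [himg, hgNfun]
    have haa' : ∀ x : EuclideanSpace ℝ (Fin d), rot u e θ (rot u e (-θ) x) = x := by
      intro x
      rw [rot_rot hu he1 he2]
      rw [show θ + -θ = 0 by ring, rot_zero]
    have himg2 := rigidCyl_image a b ρ m' (rot u e θ) (rot u e (-θ))
      (rot_add θ) (fun t x => rot_smul θ t x) (norm_rot hu he1 he2 θ) haa'
    rw [← hm] at himg2
    rw [himg2]
    have hrot_ba : rot u e θ (b - a) = Bι (b - a) := by
      have h1 : b - a = ‖b - a‖ • u := by
        rw [hudef, smul_smul, mul_inv_cancel₀ hnba.ne', one_smul]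
      rw [h1, rot_smul, hrotu', hwdef, ← map_smul]
    have hea : m' + rot u e θ (a - m) = ι a := by
      have h1 : a - m = (-(1/2) : ℝ) • (b - a) := by rw [hm]; exact sub_midpoint_left a b
      rw [h1, rot_smul, hrot_ba, hιx a, h1, map_smul, hm']
    have heb : m' + rot u e θ (b - m) = ι b := by
      have h1 : b - m = ((1/2) : ℝ) • (b - a) := by rw [hm]; exact sub_midpoint_right a b
      rw [h1, rot_smul, hrot_ba, hιx b, h1, map_smul, hm']
    rw [hea, heb]
    have hιimg : ι '' rigidCyl a b ρ = rigidCyl (ι a) (ι b) ρ := by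
      have himg3 := rigidCyl_image a b ρ (ι m) (Bι : EuclideanSpace ℝ (Fin d) → _)
        (Bι.symm : EuclideanSpace ℝ (Fin d) → _)
        (fun x y => map_add Bι x y) (fun t x => map_smul Bι t x)
        (fun x => Bι.norm_map x) (fun x => Bι.apply_symm_apply x)
      rw [← hm] at himg3
      have hfun : (fun x => ι m + Bι (x - m)) = (ι : EuclideanSpace ℝ (Fin d) → _) :=
        funext fun x => (hιx x).symm
      rw [hfun] at himg3
      rw [himg3, ← hιx a, ← hιx b]
    rw [← hιimg, hι]
  · -- isometry on the cylinder
    intro x hx y hy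
    rw [htrack x hx, htrack y hy, hgNfun]
    simp only
    rw [dist_eq_norm, dist_eq_norm]
    have h1 : m' + rot u e θ (x - m) - (m' + rot u e θ (y - m))
        = rot u e θ (x - m) - rot u e θ (y - m) := by abel
    rw [h1, ← rot_sub]
    have h2 : x - m - (y - m) = x - y := by abel
    rw [h2, norm_rot hu he1 he2]
  · -- Lipschitz
    exact compIter_lip hliplocal N
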